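/- For every n×n complex matrix A one has ‖J ∘ A‖ ≤ ‖A‖ ≤ √n · (max_{λ ∈ σ(A)} |λ| + 2n‖J ∘ A‖), where σ(A) denotes the set of eigenvalues of A. -/

import Mathlib

open Matrix

/-- The Frobenius norm of a complex matrix. -/
noncomputable def frob {n : ℕ} (A : Matrix (Fin n) (Fin n) ℂ) : ℝ :=
  Real.sqrt (∑ i, ∑ j, ‖A i j‖ ^ 2)

/-- The off-diagonal part `J ∘ A` of a matrix (Hadamard product with the matrix `J`
having zeros on the diagonal and ones elsewhere). -/
def offDiag' {n : ℕ} (A : Matrix (Fin n) (Fin n) ℂ) : Matrix (Fin n) (Fin n) ℂ :=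
  fun i j => if i = j then 0 else A i j

open Polynomial Finset

variable {n : ℕ}

lemma evalCharpoly (B : Matrix (Fin n) (Fin n) ℂ) (z : ℂ) :
    (B.charpoly).eval z = (z • (1 : Matrix (Fin n) (Fin n) ℂ) - B).det := by
  rw [Matrix.charpoly, ← Polynomial.coe_evalRingHom, RingHom.map_det]
  congr 1
  ext i j
  by_cases h : i = j
  · subst h
    simp [charmatrix_apply_eq, Matrix.one_apply]
  · simp [charmatrix_apply_ne _ _ _ h, Matrix.one_apply, h]

lemma cardRootsCharpoly (B : Matrix (Fin n) (Fin n) ℂ) :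
    Multiset.card B.charpoly.roots = n := by
  rw [Polynomial.splits_iff_card_roots.mp (IsAlgClosed.splits B.charpoly),
    Matrix.charpoly_natDegree_eq_dim, Fintype.card_fin]

lemma detProdRoots (B : Matrix (Fin n) (Fin n) ℂ) (z : ℂ) :
    (z • (1 : Matrix (Fin n) (Fin n) ℂ) - B).det
      = (B.charpoly.roots.map (fun μ => z - μ)).prod := by
  rw [← evalCharpoly]
  conv_lhs => rw [(IsAlgClosed.splits B.charpoly).eq_prod_roots_of_monic
    B.charpoly_monic]
  rw [Polynomial.eval_multiset_prod, Multiset.map_map]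
  congr 1
  ext μ
  simp

lemma memSpectrumIffDet (B : Matrix (Fin n) (Fin n) ℂ) (z : ℂ) :
    z ∈ spectrum ℂ B ↔ (z • (1 : Matrix (Fin n) (Fin n) ℂ) - B).det = 0 := by
  rw [spectrum.mem_iff, Algebra.algebraMap_eq_smul_one, Matrix.isUnit_iff_isUnit_det,
    isUnit_iff_ne_zero, not_ne_iff]

lemma multisetProdLB (ε : ℝ) (hε : 0 ≤ ε) (s : Multiset ℝ) (h : ∀ x ∈ s, ε ≤ x) :
    ε ^ (Multiset.card s) ≤ s.prod := by
  induction s using Multiset.induction with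
  | empty => simp
  | cons a s ih =>
    rw [Multiset.prod_cons, Multiset.card_cons, pow_succ, mul_comm]
    have ha : ε ≤ a := h a (Multiset.mem_cons_self a s)
    have hs : ε ^ Multiset.card s ≤ s.prod := ih fun x hx => h x (Multiset.mem_cons_of_mem hx)
    have h0 : (0:ℝ) ≤ ε ^ Multiset.card s := pow_nonneg hε _
    nlinarith [Multiset.prod_nonneg (s := s)
      (fun x hx => le_trans hε (h x (Multiset.mem_cons_of_mem hx)))]

lemma gersh (hn : 1 ≤ n) (B : Matrix (Fin n) (Fin n) ℂ) (z : ℂ)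
    (h : (z • (1 : Matrix (Fin n) (Fin n) ℂ) - B).det = 0) :
    ∃ k, ‖z - B k k‖ ≤ ∑ j ∈ univ.erase k, ‖B k j‖ := by
  haveI : NeZero n := ⟨by omega⟩
  obtain ⟨v, hv0, hv⟩ := (Matrix.exists_mulVec_eq_zero_iff).mpr h
  obtain ⟨k, -, hk⟩ := Finset.exists_max_image (univ : Finset (Fin n)) (fun j => ‖v j‖)
    Finset.univ_nonempty
  have hvk : v k ≠ 0 := by
    intro h0
    apply hv0
    ext j
    have := hk j (mem_univ j)
    rw [h0, norm_zero] at this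
    simpa using norm_le_zero_iff.mp this
  have hrow := congrFun hv k
  simp only [Matrix.mulVec, dotProduct, Matrix.sub_apply, Matrix.smul_apply,
    Matrix.one_apply, Pi.zero_apply, smul_eq_mul] at hrow
  -- hrow : ∑ j, (z * (if k = j then 1 else 0) - B k j) * v j = 0
  have key : (z - B k k) * v k = ∑ j ∈ univ.erase k, B k j * v j := by
    have h1 : ∑ j, ((z * if k = j then 1 else 0) - B k j) * v j
        = z * v k - ∑ j, B k j * v j := by
      simp_rw [sub_mul]
      rw [Finset.sum_sub_distrib]
      congr 1
      have h3 : ∀ j : Fin n, (z * if k = j then 1 else 0) * v j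
          = if k = j then z * v j else 0 := by
        intro j; split <;> simp
      rw [Finset.sum_congr rfl fun j _ => h3 j, Finset.sum_ite_eq, if_pos (mem_univ k)]
    rw [h1] at hrow
    have h2 : z * v k = ∑ j, B k j * v j := by
      exact sub_eq_zero.mp hrow
    rw [Finset.sum_erase_eq_sub (mem_univ k), ← h2]
    ring
  refine ⟨k, ?_⟩
  have h2 : ‖z - B k k‖ * ‖v k‖ ≤ (∑ j ∈ univ.erase k, ‖B k j‖) * ‖v k‖ := by
    calc ‖z - B k k‖ * ‖v k‖ = ‖(z - B k k) * v k‖ := (norm_mul _ _).symm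
    _ = ‖∑ j ∈ univ.erase k, B k j * v j‖ := by rw [key]
    _ ≤ ∑ j ∈ univ.erase k, ‖B k j‖ * ‖v j‖ := by
        refine (norm_sum_le _ _).trans ?_
        exact le_of_eq (by simp [norm_mul])
    _ ≤ ∑ j ∈ univ.erase k, ‖B k j‖ * ‖v k‖ := by
        refine Finset.sum_le_sum fun j _ => ?_
        exact mul_le_mul_of_nonneg_left (hk j (mem_univ j)) (norm_nonneg _)
    _ = (∑ j ∈ univ.erase k, ‖B k j‖) * ‖v k‖ := by rw [Finset.sum_mul]
  exact le_of_mul_le_mul_right h2 (norm_pos_iff.mpr hvk)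

lemma rootNear (B : Matrix (Fin n) (Fin n) ℂ) (z : ℂ) (ε : ℝ) (hε : 0 < ε)
    (h : ‖(z • (1 : Matrix (Fin n) (Fin n) ℂ) - B).det‖ < ε ^ n) :
    ∃ μ, ((μ : ℂ) • (1 : Matrix (Fin n) (Fin n) ℂ) - B).det = 0 ∧ ‖z - μ‖ < ε := by
  by_contra hcon
  push_neg at hcon
  have hall : ∀ μ ∈ B.charpoly.roots, ε ≤ ‖z - μ‖ := by
    intro μ hμ
    refine hcon μ ?_
    rw [detProdRoots]
    refine Multiset.prod_eq_zero ?_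
    refine Multiset.mem_map.mpr ⟨μ, hμ, by ring⟩
  have : ε ^ n ≤ ‖(z • (1 : Matrix (Fin n) (Fin n) ℂ) - B).det‖ := by
    rw [detProdRoots]
    have hmap : ‖(B.charpoly.roots.map (fun μ => z - μ)).prod‖
        = ((B.charpoly.roots.map (fun μ => z - μ)).map (fun x : ℂ => ‖x‖)).prod := by
      exact_mod_cast (Multiset.prod_hom (B.charpoly.roots.map (fun μ => z - μ))
        (normHom : ℂ →*₀ ℝ).toMonoidHom).symm
    rw [hmap, Multiset.map_map]
    have hh := multisetProdLB ε hε.le (B.charpoly.roots.map fun μ => ‖z - μ‖)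
      (by intro x hx
          obtain ⟨μ, hμ, rfl⟩ := Multiset.mem_map.mp hx
          exact hall μ hμ)
    rw [Multiset.card_map, cardRootsCharpoly] at hh
    exact hh
  linarith

lemma contDet (d : Fin n → ℂ) (A : Matrix (Fin n) (Fin n) ℂ) (c : ℝ → ℝ) (hc : Continuous c) :
    Continuous (fun p : ℝ × ℂ =>
      (p.2 • (1 : Matrix (Fin n) (Fin n) ℂ) -
        Matrix.of (fun j k => if j = k then d j else (c p.1 : ℂ) * A j k)).det) := by
  refine Continuous.matrix_det ?_
  refine continuous_matrix ?_
  intro j k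
  by_cases h : j = k
  · subst h
    have hfun : (fun p : ℝ × ℂ => (p.2 • (1 : Matrix (Fin n) (Fin n) ℂ) -
        Matrix.of (fun j k => if j = k then d j else (c p.1 : ℂ) * A j k)) j j)
        = fun p : ℝ × ℂ => p.2 - d j := by
      funext p
      simp [Matrix.one_apply]
    rw [hfun]
    fun_prop
  · have hfun : (fun p : ℝ × ℂ => (p.2 • (1 : Matrix (Fin n) (Fin n) ℂ) -
        Matrix.of (fun j k => if j = k then d j else (c p.1 : ℂ) * A j k)) j k)
        = fun p : ℝ × ℂ => -((c p.1 : ℂ) * A j k) := by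
      funext p
      simp [Matrix.one_apply, h]
    rw [hfun]
    have hcc : Continuous fun p : ℝ × ℂ => ((c p.1 : ℂ)) :=
      Complex.continuous_ofReal.comp (hc.comp continuous_fst)
    fun_prop

lemma walkBound {n : ℕ} (d : Fin n → ℂ) (R : Fin n → ℝ) (ε : ℝ)
    (G : SimpleGraph (Fin n)) (hadj : ∀ a b, G.Adj a b → ‖d a - d b‖ ≤ R a + R b + 2*ε) :
    ∀ {a b : Fin n} (p : G.Walk a b),
      ‖d a - d b‖ ≤ 2 * (p.support.map R).sum - R a - R b + 2 * p.length * ε := by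
  intro a b p
  induction p with
  | nil =>
    simp only [SimpleGraph.Walk.support_nil, List.map_cons, List.map_nil, List.sum_cons,
      List.sum_nil, SimpleGraph.Walk.length_nil, sub_self, norm_zero]
    push_cast
    linarith
  | @cons a b c h p ih =>
    have h1 : ‖d a - d c‖ ≤ ‖d a - d b‖ + ‖d b - d c‖ := by
      calc ‖d a - d c‖ = ‖(d a - d b) + (d b - d c)‖ := by ring_nf
      _ ≤ _ := norm_add_le _ _
    have h2 := hadj a b h
    rw [SimpleGraph.Walk.support_cons, SimpleGraph.Walk.length_cons]
    simp only [List.map_cons, List.sum_cons]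
    push_cast
    linarith

lemma nodupSumLe {n : ℕ} (R : Fin n → ℝ) (hR : ∀ j, 0 ≤ R j) (l : List (Fin n))
    (hl : l.Nodup) : (l.map R).sum ≤ ∑ j, R j := by
  rw [← List.sum_toFinset _ hl]
  exact Finset.sum_le_sum_of_subset_of_nonneg (Finset.subset_univ _) (fun j _ _ => hR j)

lemma keyLemma (hn : 1 ≤ n) (A : Matrix (Fin n) (Fin n) ℂ) (i : Fin n) (ε : ℝ) (hε : 0 < ε) :
    ∃ z : ℂ, (z • (1 : Matrix (Fin n) (Fin n) ℂ) - A).det = 0 ∧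
      ‖A i i - z‖ ≤ 2 * (∑ j, ∑ k ∈ univ.erase j, ‖A j k‖) + (2 * n + 1) * ε := by
  set d : Fin n → ℂ := fun j => A j j with hd
  set R : Fin n → ℝ := fun j => ∑ k ∈ univ.erase j, ‖A j k‖ with hRdef
  have hR : ∀ j, 0 ≤ R j := fun j => Finset.sum_nonneg fun k _ => norm_nonneg _
  set c : ℝ → ℝ := fun t => max 0 (min t 1) with hcdef
  have hc0 : c 0 = 0 := by norm_num [hcdef]
  have hc1 : c 1 = 1 := by norm_num [hcdef]
  have hcmem : ∀ t, 0 ≤ c t ∧ c t ≤ 1 := fun t =>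
    ⟨le_max_left _ _, max_le (by norm_num) (min_le_right _ _)⟩
  have hccont : Continuous c := continuous_const.max (continuous_id.min continuous_const)
  set B : ℝ → Matrix (Fin n) (Fin n) ℂ :=
    fun t => Matrix.of (fun j k => if j = k then d j else (c t : ℂ) * A j k) with hBdef
  have hB1 : B 1 = A := by
    ext j k
    by_cases h : j = k
    · subst h; simp [hBdef, hd]
    · simp [hBdef, h, hc1]
  have hBd : ∀ t j, B t j j = d j := by intro t j; simp [hBdef]
  have hrcont : Continuous (fun p : ℝ × ℂ =>
      (p.2 • (1 : Matrix (Fin n) (Fin n) ℂ) - B p.1).det) := contDet d A c hccont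
  -- Gershgorin for the family
  have hgersh : ∀ t z, (z • (1 : Matrix (Fin n) (Fin n) ℂ) - B t).det = 0 →
      ∃ k, ‖z - d k‖ ≤ R k := by
    intro t z hz
    obtain ⟨k, hk⟩ := gersh hn (B t) z hz
    rw [hBd] at hk
    refine ⟨k, hk.trans ?_⟩
    calc ∑ j ∈ univ.erase k, ‖B t k j‖ = ∑ j ∈ univ.erase k, c t * ‖A k j‖ := by
          refine Finset.sum_congr rfl fun j hj => ?_
          have hkj : ¬ (k = j) := fun h => (Finset.mem_erase.mp hj).1 h.symm
          simp only [hBdef, Matrix.of_apply, if_neg hkj]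
          rw [norm_mul, Complex.norm_real, Real.norm_eq_abs, abs_of_nonneg (hcmem t).1]
    _ ≤ ∑ j ∈ univ.erase k, ‖A k j‖ :=
          Finset.sum_le_sum fun j _ => mul_le_of_le_one_left (norm_nonneg _) (hcmem t).2
  -- the graph
  set G : SimpleGraph (Fin n) :=
    { Adj := fun j k => j ≠ k ∧ ‖d j - d k‖ < R j + R k + 2*ε
      symm := ⟨by
        rintro a b ⟨hne, hlt⟩
        exact ⟨hne.symm, by rw [norm_sub_rev]; linarith⟩⟩
      loopless := ⟨fun a h => h.1 rfl⟩ } with hGdef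
  set U : Set ℂ := {z | ∃ j, G.Reachable i j ∧ dist z (d j) < R j + ε} with hUdef
  -- dichotomy
  have dichotomy : ∀ z : ℂ, (∃ k, ‖z - d k‖ ≤ R k) →
      (Metric.ball z ε ⊆ U) ∨ (∀ u ∈ U, ε ≤ dist z u) := by
    rintro z ⟨k, hk⟩
    by_cases hreach : G.Reachable i k
    · left
      intro w hw
      have h1 : dist w z < ε := Metric.mem_ball.mp hw
      have h2 : dist z (d k) ≤ R k := by rwa [dist_eq_norm]
      refine ⟨k, hreach, ?_⟩
      calc dist w (d k) ≤ dist w z + dist z (d k) := dist_triangle _ _ _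
      _ < R k + ε := by linarith
    · right
      rintro u ⟨j, hj, hu⟩
      have hjk : j ≠ k := by rintro rfl; exact hreach hj
      have hnadj : ¬ G.Adj j k := fun hadj => hreach (hj.trans hadj.reachable)
      have hsep : R j + R k + 2*ε ≤ ‖d j - d k‖ := by
        by_contra hlt
        push_neg at hlt
        exact hnadj ⟨hjk, hlt⟩
      have h1 : dist (d j) (d k) ≤ dist (d j) u + dist u z + dist z (d k) :=
        dist_triangle4 _ _ _ _
      have h2 : dist (d j) (d k) = ‖d j - d k‖ := dist_eq_norm _ _
      have h3 : dist z (d k) ≤ R k := by rwa [dist_eq_norm]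
      have h4 : dist (d j) u < R j + ε := by rwa [dist_comm]
      have h5 : dist z u = dist u z := dist_comm _ _
      linarith
  set T : Set ℝ := {t | ∃ z ∈ U, (z • (1 : Matrix (Fin n) (Fin n) ℂ) - B t).det = 0} with hTdef
  have h0T : (0:ℝ) ∈ T := by
    refine ⟨d i, ⟨i, SimpleGraph.Reachable.refl i, by simp [dist_self]; positivity⟩, ?_⟩
    have hdiag : (d i • (1 : Matrix (Fin n) (Fin n) ℂ) - B 0)
        = Matrix.diagonal (fun j => d i - d j) := by
      ext j k
      by_cases h : j = k
      · subst h; simp [hBdef, Matrix.diagonal]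
      · simp [hBdef, h, hc0, Matrix.diagonal, Matrix.one_apply, h]
    rw [hdiag, Matrix.det_diagonal]
    exact Finset.prod_eq_zero (mem_univ i) (sub_self _)
  have hTopen : IsOpen T := by
    rw [isOpen_iff_mem_nhds]
    rintro t ⟨z, hzU, hz0⟩
    have hball : Metric.ball z ε ⊆ U := by
      rcases dichotomy z (hgersh t z hz0) with hb | hfar
      · exact hb
      · exfalso
        have := hfar z hzU
        simp [dist_self] at this
        linarith
    have hcont1 : Continuous fun s : ℝ => (z • (1 : Matrix (Fin n) (Fin n) ℂ) - B s).det :=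
      hrcont.comp (continuous_id.prodMk continuous_const)
    have hopen : IsOpen {s : ℝ | ‖(z • (1 : Matrix (Fin n) (Fin n) ℂ) - B s).det‖ < ε ^ n} :=
      isOpen_lt hcont1.norm continuous_const
    have htmem : t ∈ {s : ℝ | ‖(z • (1 : Matrix (Fin n) (Fin n) ℂ) - B s).det‖ < ε ^ n} := by
      simp only [Set.mem_setOf_eq, hz0, norm_zero]
      positivity
    refine Filter.mem_of_superset (hopen.mem_nhds htmem) ?_
    intro s hs
    obtain ⟨μ, hμ0, hμε⟩ := rootNear (B s) z ε hε hs
    refine ⟨μ, hball ?_, hμ0⟩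
    rw [Metric.mem_ball, dist_eq_norm, norm_sub_rev]
    exact hμε
  have hTclosed : IsClosed T := by
    refine IsSeqClosed.isClosed ?_
    intro x p hx hxp
    choose zs hzsU hzs0 using hx
    set C : ℝ := ∑ j, (‖d j‖ + R j) with hCdef
    have hbd : ∀ k, zs k ∈ Metric.closedBall (0:ℂ) C := by
      intro k
      obtain ⟨j, hj⟩ := hgersh (x k) (zs k) (hzs0 k)
      rw [Metric.mem_closedBall, dist_zero_right]
      calc ‖zs k‖ ≤ ‖zs k - d j‖ + ‖d j‖ := by
            simpa using norm_add_le (zs k - d j) (d j)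
      _ ≤ ‖d j‖ + R j := by linarith
      _ ≤ C := Finset.single_le_sum (f := fun j => ‖d j‖ + R j)
            (fun j _ => by positivity) (mem_univ j)
    obtain ⟨z, hzC, φ, hφ, hzs⟩ := tendsto_subseq_of_bounded Metric.isBounded_closedBall hbd
    have h1 : Filter.Tendsto (fun k => ((x (φ k) : ℝ), zs (φ k))) Filter.atTop (nhds (p, z)) :=
      ((hxp.comp hφ.tendsto_atTop)).prodMk_nhds hzs
    have h2 := (hrcont.tendsto (p, z)).comp h1
    have h3 : (fun k => ((zs (φ k)) • (1 : Matrix (Fin n) (Fin n) ℂ) - B (x (φ k))).det)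
        = fun _ => (0:ℂ) := funext fun k => hzs0 (φ k)
    have hlim : (z • (1 : Matrix (Fin n) (Fin n) ℂ) - B p).det = 0 := by
      have h4 : Filter.Tendsto (fun _ : ℕ => (0:ℂ)) Filter.atTop
          (nhds ((z • (1 : Matrix (Fin n) (Fin n) ℂ) - B p).det)) := by
        simpa only [Function.comp_def, hzs0] using h2
      exact tendsto_nhds_unique h4 tendsto_const_nhds
    rcases dichotomy z (hgersh p z hlim) with hb | hfar
    · exact ⟨z, hb (Metric.mem_ball_self hε), hlim⟩
    · exfalso
      have h5 : ∀ k, ε ≤ dist z (zs (φ k)) := fun k => hfar _ (hzsU (φ k))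
      have h6 : Filter.Tendsto (fun k => dist z (zs (φ k))) Filter.atTop (nhds 0) := by
        have := (tendsto_const_nhds (x := z) (f := Filter.atTop (α := ℕ))).dist hzs
        simpa using this
      have := ge_of_tendsto h6 (Filter.Eventually.of_forall h5)
      linarith
  have hT1 : (1:ℝ) ∈ T := by
    have : T = Set.univ := IsClopen.eq_univ ⟨hTclosed, hTopen⟩ ⟨0, h0T⟩
    rw [this]; trivial
  obtain ⟨z, hzU, hz0⟩ := hT1
  rw [hB1] at hz0
  obtain ⟨j, hreach, hdist⟩ := hzU
  obtain ⟨w⟩ := hreach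
  set q : G.Walk i j := ↑w.toPath with hq
  have hqpath : q.IsPath := w.toPath.2
  have hwb := walkBound d R ε G (fun a b hab => le_of_lt hab.2) q
  have hsum : (q.support.map R).sum ≤ ∑ j, R j := nodupSumLe R hR _ hqpath.support_nodup
  have hlen : (q.length : ℝ) ≤ (n : ℝ) - 1 := by
    have := hqpath.length_lt
    rw [Fintype.card_fin] at this
    have : q.length ≤ n - 1 := by omega
    have hn' : (1:ℝ) ≤ (n:ℝ) := by exact_mod_cast hn
    calc (q.length : ℝ) ≤ ((n - 1 : ℕ) : ℝ) := by exact_mod_cast this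
    _ = (n:ℝ) - 1 := by
        have : (1:ℕ) ≤ n := hn
        push_cast [Nat.cast_sub this]
        ring
  refine ⟨z, hz0, ?_⟩
  have htri : ‖A i i - z‖ ≤ ‖d i - d j‖ + ‖d j - z‖ := by
    calc ‖A i i - z‖ = ‖(d i - d j) + (d j - z)‖ := by rw [hd]; ring_nf
    _ ≤ _ := norm_add_le _ _
  have hdz : ‖d j - z‖ < R j + ε := by
    rw [← dist_eq_norm, dist_comm]
    exact hdist
  have hRi : 0 ≤ R i := hR i
  have hRj : 0 ≤ R j := hR j
  have hSig : ∑ j, R j = ∑ j, ∑ k ∈ univ.erase j, ‖A j k‖ := rfl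
  rw [← hSig]
  nlinarith [hwb, hsum, hlen, htri, hdz, hε]

set_option maxHeartbeats 2000000 in
/-- `‖J ∘ A‖ ≤ ‖A‖ ≤ √n (max_{λ∈σ(A)} |λ| + 2n ‖J ∘ A‖)`. -/
theorem frob_le_and_le_sqrt_mul {n : ℕ} (hn : 1 ≤ n) (A : Matrix (Fin n) (Fin n) ℂ) :
    frob (offDiag' A) ≤ frob A ∧
      frob A ≤ Real.sqrt n *
        (sSup ((fun μ : ℂ => ‖μ‖) '' spectrum ℂ A) + 2 * n * frob (offDiag' A)) := by
  haveI : NeZero n := ⟨by omega⟩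
  constructor
  · apply Real.sqrt_le_sqrt
    refine Finset.sum_le_sum fun i _ => Finset.sum_le_sum fun j _ => ?_
    by_cases h : i = j
    · simp [offDiag', h]
    · simp [offDiag', h]
  set M : ℝ := sSup ((fun μ : ℂ => ‖μ‖) '' spectrum ℂ A) with hM
  set F : ℝ := frob (offDiag' A) with hF
  set Sg : ℝ := ∑ j, ∑ k ∈ univ.erase j, ‖A j k‖ with hSg
  have hF0 : 0 ≤ F := Real.sqrt_nonneg _
  have hSg0 : 0 ≤ Sg := Finset.sum_nonneg fun j _ =>
    Finset.sum_nonneg fun k _ => norm_nonneg _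
  -- spectrum is finite
  have hspecsub : spectrum ℂ A ⊆ ↑(A.charpoly.roots.toFinset) := by
    intro z hz
    rw [memSpectrumIffDet] at hz
    rw [Finset.mem_coe, Multiset.mem_toFinset, Polynomial.mem_roots
      (A.charpoly_monic.ne_zero)]
    rw [Polynomial.IsRoot, evalCharpoly, hz]
  have hfin : (spectrum ℂ A).Finite := Set.Finite.subset (A.charpoly.roots.toFinset).finite_toSet
    hspecsub
  have hbdd : BddAbove ((fun μ : ℂ => ‖μ‖) '' spectrum ℂ A) := (hfin.image _).bddAbove
  have hMge : ∀ z ∈ spectrum ℂ A, ‖z‖ ≤ M := fun z hz =>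
    le_csSup hbdd (Set.mem_image_of_mem _ hz)
  -- spectrum nonempty, M ≥ 0
  have hM0 : 0 ≤ M := by
    have hdeg : 0 < A.charpoly.degree := by
      rw [Matrix.charpoly_degree_eq_dim, Fintype.card_fin]
      exact_mod_cast hn
    obtain ⟨z, hz⟩ := Complex.exists_root hdeg
    have hzs : z ∈ spectrum ℂ A := by
      rw [memSpectrumIffDet, ← evalCharpoly]
      exact hz
    exact le_trans (norm_nonneg z) (hMge z hzs)
  -- per-entry bound
  have hentry : ∀ i, ‖A i i‖ ≤ M + 2 * Sg := by
    intro i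
    have hall : ∀ ε : ℝ, 0 < ε → ‖A i i‖ ≤ M + 2 * Sg + ε := by
      intro ε hε
      have h2n1 : (0:ℝ) < 2 * n + 1 := by positivity
      obtain ⟨z, hdet, hle⟩ := keyLemma hn A i (ε / (2 * n + 1)) (by positivity)
      have hzs : z ∈ spectrum ℂ A := (memSpectrumIffDet A z).mpr hdet
      have h1 : ‖A i i‖ ≤ ‖A i i - z‖ + ‖z‖ := by
        simpa using norm_add_le (A i i - z) z
      have h2 : (2 * (n:ℝ) + 1) * (ε / (2 * n + 1)) = ε := by field_simp
      have h3 := hMge z hzs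
      rw [h2] at hle
      calc ‖A i i‖ ≤ ‖A i i - z‖ + ‖z‖ := h1
      _ ≤ (2 * Sg + ε) + M := by
          have := hle
          rw [← hSg] at this
          linarith
      _ = M + 2 * Sg + ε := by ring
    by_contra hc
    push_neg at hc
    have := hall ((‖A i i‖ - (M + 2 * Sg)) / 2) (by linarith)
    linarith
  -- Cauchy-Schwarz : 2 Sg ≤ (2n-1) F
  have hFsq : F ^ 2 = ∑ p : Fin n × Fin n, ‖offDiag' A p.1 p.2‖ ^ 2 := by
    rw [hF, frob, Real.sq_sqrt]
    · rw [Fintype.sum_prod_type]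
    · exact Finset.sum_nonneg fun i _ => Finset.sum_nonneg fun j _ => by positivity
  have hSgeq : Sg = ∑ p ∈ (univ : Finset (Fin n)).offDiag, ‖offDiag' A p.1 p.2‖ := by
    have step1 : Sg = ∑ j, ∑ k, ‖offDiag' A j k‖ := by
      rw [hSg]
      refine Finset.sum_congr rfl fun j _ => ?_
      rw [← Finset.sum_erase_add univ _ (mem_univ j)]
      have h0 : ‖offDiag' A j j‖ = 0 := by simp [offDiag']
      rw [h0, add_zero]
      refine Finset.sum_congr rfl fun k hk => ?_
      have : k ≠ j := (Finset.mem_erase.mp hk).1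
      simp [offDiag', this.symm]
    rw [step1, ← Fintype.sum_prod_type']
    rw [eq_comm]
    refine Finset.sum_subset (Finset.subset_univ _) ?_
    intro p _ hp
    have hpp : p.1 = p.2 := by
      by_contra hne
      exact hp (Finset.mem_offDiag.mpr ⟨mem_univ _, mem_univ _, hne⟩)
    simp [offDiag', hpp]
  -- Cauchy-Schwarz
  have hcs := Finset.sum_mul_sq_le_sq_mul_sq ((univ : Finset (Fin n)).offDiag)
    (fun p => ‖offDiag' A p.1 p.2‖) (fun _ => (1:ℝ))
  simp only [mul_one, one_pow] at hcs
  have hcard : ((univ : Finset (Fin n)).offDiag.card : ℝ) = (n:ℝ)^2 - n := by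
    rw [Finset.offDiag_card, Finset.card_univ, Fintype.card_fin]
    have h1 : n ≤ n * n := Nat.le_mul_of_pos_left n (by omega)
    push_cast [Nat.cast_sub h1]
    ring
  have hsub : ∑ p ∈ (univ : Finset (Fin n)).offDiag, ‖offDiag' A p.1 p.2‖ ^ 2
      ≤ F ^ 2 := by
    rw [hFsq]
    exact Finset.sum_le_sum_of_subset_of_nonneg (Finset.subset_univ _)
      (fun p _ _ => by positivity)
  have hCS : Sg ^ 2 ≤ ((n:ℝ)^2 - n) * F ^ 2 := by
    rw [hSgeq]
    calc (∑ p ∈ (univ : Finset (Fin n)).offDiag, ‖offDiag' A p.1 p.2‖) ^ 2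
        ≤ (∑ p ∈ (univ : Finset (Fin n)).offDiag, ‖offDiag' A p.1 p.2‖ ^ 2) *
          ((univ : Finset (Fin n)).offDiag.card : ℝ) := by
          simpa [Finset.sum_const, nsmul_eq_mul, mul_comm] using hcs
    _ = (∑ p ∈ (univ : Finset (Fin n)).offDiag, ‖offDiag' A p.1 p.2‖ ^ 2) *
          ((n:ℝ)^2 - n) := by rw [hcard]
    _ ≤ F ^ 2 * ((n:ℝ)^2 - n) := by
          refine mul_le_mul_of_nonneg_right hsub ?_
          have : (1:ℝ) ≤ (n:ℝ) := by exact_mod_cast hn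
          nlinarith
    _ = ((n:ℝ)^2 - n) * F ^ 2 := mul_comm _ _
  have hn1 : (1:ℝ) ≤ (n:ℝ) := by exact_mod_cast hn
  have h2n1 : (0:ℝ) ≤ 2*(n:ℝ) - 1 := by linarith
  have h2Sg : 2 * Sg ≤ (2*(n:ℝ) - 1) * F := by
    calc 2*Sg = Real.sqrt ((2*Sg)^2) := (Real.sqrt_sq (by linarith)).symm
    _ ≤ Real.sqrt (((2*(n:ℝ)-1)*F)^2) := by
        refine Real.sqrt_le_sqrt ?_
        nlinarith [hCS, sq_nonneg F]
    _ = (2*(n:ℝ)-1)*F := Real.sqrt_sq (mul_nonneg h2n1 hF0)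
  -- Minkowski
  set K : ℝ := M + 2 * Sg with hK
  have hK0 : 0 ≤ K := by rw [hK]; linarith
  set x : EuclideanSpace ℂ (Fin n × Fin n) :=
    (WithLp.equiv 2 _).symm (fun p => if p.1 = p.2 then A p.1 p.2 else 0) with hx
  set y : EuclideanSpace ℂ (Fin n × Fin n) :=
    (WithLp.equiv 2 _).symm (fun p => offDiag' A p.1 p.2) with hy
  have hxy : x + y = (WithLp.equiv 2 _).symm (fun p : Fin n × Fin n => A p.1 p.2) := by
    simp only [hx, hy, WithLp.equiv_symm_apply, ← WithLp.toLp_add]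
    congr 1
    funext p
    by_cases h : p.1 = p.2 <;> simp [offDiag', h]
  have hnormA : frob A = ‖x + y‖ := by
    rw [hxy, EuclideanSpace.norm_eq]
    unfold frob
    congr 1
    rw [Fintype.sum_prod_type]
    refine Finset.sum_congr rfl fun i _ => Finset.sum_congr rfl fun j _ => ?_
    rw [WithLp.equiv_symm_apply, PiLp.toLp_apply]
  have hnormy : ‖y‖ = F := by
    rw [hy, EuclideanSpace.norm_eq, hF]
    unfold frob
    congr 1
    rw [Fintype.sum_prod_type]
    refine Finset.sum_congr rfl fun i _ => Finset.sum_congr rfl fun j _ => ?_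
    rw [WithLp.equiv_symm_apply, PiLp.toLp_apply]
  have hnormx : ‖x‖ ≤ Real.sqrt (n * K ^ 2) := by
    rw [hx, EuclideanSpace.norm_eq]
    refine Real.sqrt_le_sqrt ?_
    calc ∑ p : Fin n × Fin n,
          ‖((WithLp.equiv 2 _).symm (fun p : Fin n × Fin n => if p.1 = p.2 then A p.1 p.2 else 0)) p‖ ^ 2
        = ∑ i, ∑ j, ‖if i = j then A i j else (0:ℂ)‖ ^ 2 := by
          rw [Fintype.sum_prod_type]
          refine Finset.sum_congr rfl fun i _ => Finset.sum_congr rfl fun j _ => ?_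
          rw [WithLp.equiv_symm_apply, PiLp.toLp_apply]
    _ ≤ ∑ i, ∑ j, (if i = j then K ^ 2 else 0) := by
          refine Finset.sum_le_sum fun i _ => Finset.sum_le_sum fun j _ => ?_
          by_cases h : i = j
          · subst h
            simp only [if_pos rfl]
            exact pow_le_pow_left₀ (norm_nonneg _) (hentry i) 2
          · simp [h]
    _ = (n:ℝ) * K ^ 2 := by
          have : ∀ i : Fin n, ∑ j, (if i = j then K ^ 2 else 0) = K ^ 2 := fun i => by
            rw [Finset.sum_ite_eq]
            simp
          rw [Finset.sum_congr rfl fun i _ => this i, Finset.sum_const, Finset.card_univ,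
            Fintype.card_fin, nsmul_eq_mul]
  have hsqrtnK : Real.sqrt (n * K ^ 2) = Real.sqrt n * K := by
    rw [Real.sqrt_mul (by positivity), Real.sqrt_sq hK0]
  have hfrobA : frob A ≤ Real.sqrt n * K + F := by
    rw [hnormA]
    calc ‖x + y‖ ≤ ‖x‖ + ‖y‖ := norm_add_le _ _
    _ ≤ Real.sqrt (n * K ^ 2) + F := by rw [hnormy]; linarith [hnormx]
    _ = Real.sqrt n * K + F := by rw [hsqrtnK]
  have hsn1 : (1:ℝ) ≤ Real.sqrt n := by
    rw [show (1:ℝ) = Real.sqrt 1 by simp]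
    exact Real.sqrt_le_sqrt hn1
  have hsn0 : (0:ℝ) ≤ Real.sqrt n := Real.sqrt_nonneg _
  have hstep1 : Real.sqrt n * (2 * Sg) ≤ Real.sqrt n * ((2*(n:ℝ)-1) * F) :=
    mul_le_mul_of_nonneg_left h2Sg hsn0
  have hstep2 : F ≤ Real.sqrt n * F := le_mul_of_one_le_left hF0 hsn1
  rw [hK] at hfrobA
  nlinarith [hfrobA, hstep1, hstep2]
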